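/- The expected cost C_exp is (totally) differentiable at every point (X,Y) with Y > 0, and its partial derivatives are given by differentiation under the integral sign: ∂C_exp/∂X (X,Y) = a·b·∫₀^W (X−x)·φ(x)/√(b(X−x)² + Y²) dx and ∂C_exp/∂Y (X,Y) = a·Y·∫₀^W φ(x)/√(b(X−x)² + Y²) dx − c. -/

import Mathlib

open Real MeasureTheory Filter Metric

-- derivative of the integrand at a point q with q.2 > 0
lemma aux_deriv (a b c : ℝ) (φ : ℝ → ℝ) (x : ℝ) (q : ℝ × ℝ) (hb : 0 < b) (hq : 0 < q.2) :
    HasFDerivAt (fun p : ℝ × ℝ => (a * Real.sqrt (b * (p.1 - x) ^ 2 + p.2 ^ 2) - c * p.2) * φ x)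
      ((a * b * (q.1 - x) * φ x / Real.sqrt (b * (q.1 - x) ^ 2 + q.2 ^ 2)) •
          ContinuousLinearMap.fst ℝ ℝ ℝ +
        ((a * q.2 / Real.sqrt (b * (q.1 - x) ^ 2 + q.2 ^ 2) - c) * φ x) •
          ContinuousLinearMap.snd ℝ ℝ ℝ) q := by
  have hs : 0 < b * (q.1 - x) ^ 2 + q.2 ^ 2 := by positivity
  have hss : 0 < Real.sqrt (b * (q.1 - x) ^ 2 + q.2 ^ 2) := Real.sqrt_pos.2 hs
  have h1 : HasFDerivAt (fun p : ℝ × ℝ => b * (p.1 - x) ^ 2 + p.2 ^ 2)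
      ((2 * b * (q.1 - x)) • ContinuousLinearMap.fst ℝ ℝ ℝ +
        (2 * q.2) • ContinuousLinearMap.snd ℝ ℝ ℝ) q := by
    simp only [pow_two]
    have hf : HasFDerivAt (fun p : ℝ × ℝ => p.1 - x) (ContinuousLinearMap.fst ℝ ℝ ℝ) q :=
      (hasFDerivAt_fst).sub_const x
    have hg : HasFDerivAt (fun p : ℝ × ℝ => p.2) (ContinuousLinearMap.snd ℝ ℝ ℝ) q :=
      hasFDerivAt_snd
    have h2 := ((hf.mul hf).const_mul b).add (hg.mul hg)
    refine h2.congr_fderiv ?_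
    ext <;> simp <;> ring
  have hg2 : HasFDerivAt (fun p : ℝ × ℝ => p.2) (ContinuousLinearMap.snd ℝ ℝ ℝ) q :=
    hasFDerivAt_snd
  have h2 := (Real.hasDerivAt_sqrt hs.ne').comp_hasFDerivAt q h1
  have h3 := ((h2.const_mul a).sub (hg2.const_mul c)).mul_const (φ x)
  refine h3.congr_fderiv ?_
  ext <;> simp <;> field_simp <;> ring

lemma aux_intOn {g φ : ℝ → ℝ} (W M : ℝ) (hg : Continuous g) (hφm : Measurable φ)
    (hφ0 : ∀ x, 0 ≤ φ x) (hφM : ∀ x, φ x ≤ M) :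
    IntegrableOn (fun x => g x * φ x) (Set.Ioc 0 W) := by
  have h := (hg.integrableOn_Ioc (a := 0) (b := W) (μ := volume)).bdd_mul hφm.aestronglyMeasurable
    (c := M) (Filter.Eventually.of_forall fun x => by rw [Real.norm_eq_abs, abs_of_nonneg (hφ0 x)]; exact hφM x)
  exact h.congr (Filter.Eventually.of_forall fun x => mul_comm _ _)

lemma aux_bound (a b c M : ℝ) (φ : ℝ → ℝ) (hb : 0 < b) (hc : 0 < c) (hca : c < a)
    (hφ0 : ∀ x, 0 ≤ φ x) (hφM : ∀ x, φ x ≤ M) (x : ℝ) (q : ℝ × ℝ) (hq : 0 < q.2) :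
    ‖(a * b * (q.1 - x) * φ x / Real.sqrt (b * (q.1 - x) ^ 2 + q.2 ^ 2)) •
        ContinuousLinearMap.fst ℝ ℝ ℝ +
      ((a * q.2 / Real.sqrt (b * (q.1 - x) ^ 2 + q.2 ^ 2) - c) * φ x) •
        ContinuousLinearMap.snd ℝ ℝ ℝ‖ ≤ a * Real.sqrt b * M + (a + c) * M := by
  have ha : 0 < a := hc.trans hca
  have hM : 0 ≤ M := le_trans (hφ0 x) (hφM x)
  set s := b * (q.1 - x) ^ 2 + q.2 ^ 2 with hs_def
  have hs : 0 < s := by nlinarith [mul_nonneg hb.le (sq_nonneg (q.1 - x)), pow_pos hq 2]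
  have hrs : 0 < Real.sqrt s := Real.sqrt_pos.2 hs
  have key1 : Real.sqrt b * |q.1 - x| ≤ Real.sqrt s := by
    rw [← Real.sqrt_sq_eq_abs, ← Real.sqrt_mul hb.le]
    exact Real.sqrt_le_sqrt (by nlinarith [sq_nonneg q.2])
  have key2 : q.2 ≤ Real.sqrt s := by
    rw [← Real.sqrt_sq hq.le]
    exact Real.sqrt_le_sqrt (by nlinarith [mul_nonneg hb.le (sq_nonneg (q.1 - x))])
  have hsb : Real.sqrt b * Real.sqrt b = b := Real.mul_self_sqrt hb.le
  have hα : |a * b * (q.1 - x) * φ x / Real.sqrt s| ≤ a * Real.sqrt b * M := by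
    rw [abs_div, abs_of_pos hrs, div_le_iff₀ hrs]
    have h1 : |a * b * (q.1 - x) * φ x| = a * b * |q.1 - x| * φ x := by
      rw [abs_mul, abs_mul, abs_mul, abs_of_pos ha, abs_of_pos hb, abs_of_nonneg (hφ0 x)]
    rw [h1]
    have h2 : a * Real.sqrt b * ((Real.sqrt b * |q.1 - x|) * φ x)
        ≤ a * Real.sqrt b * (Real.sqrt s * M) :=
      mul_le_mul_of_nonneg_left (mul_le_mul key1 (hφM x) (hφ0 x) hrs.le) (by positivity)
    calc a * b * |q.1 - x| * φ x
        = a * Real.sqrt b * ((Real.sqrt b * |q.1 - x|) * φ x) := by linear_combination (a * |q.1 - x| * φ x) * hsb.symm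
      _ ≤ a * Real.sqrt b * (Real.sqrt s * M) := h2
      _ = a * Real.sqrt b * M * Real.sqrt s := by ring
  have hβ : |(a * q.2 / Real.sqrt s - c) * φ x| ≤ (a + c) * M := by
    rw [abs_mul, abs_of_nonneg (hφ0 x)]
    have h3 : a * q.2 / Real.sqrt s ≤ a := by
      rw [div_le_iff₀ hrs]; nlinarith
    have h4 : 0 ≤ a * q.2 / Real.sqrt s := by positivity
    have h5 : |a * q.2 / Real.sqrt s - c| ≤ a + c := abs_le.2 ⟨by linarith, by linarith⟩
    exact mul_le_mul h5 (hφM x) (hφ0 x) (by linarith)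
  apply ContinuousLinearMap.opNorm_le_bound _ (add_nonneg (mul_nonneg (mul_nonneg ha.le (Real.sqrt_nonneg b)) hM)
    (mul_nonneg (by linarith) hM))
  intro v
  simp only [ContinuousLinearMap.add_apply, ContinuousLinearMap.smul_apply,
    ContinuousLinearMap.coe_fst', ContinuousLinearMap.coe_snd', smul_eq_mul, Real.norm_eq_abs]
  calc |a * b * (q.1 - x) * φ x / Real.sqrt s * v.1 +
        (a * q.2 / Real.sqrt s - c) * φ x * v.2|
      ≤ |a * b * (q.1 - x) * φ x / Real.sqrt s * v.1| +
        |(a * q.2 / Real.sqrt s - c) * φ x * v.2| := abs_add_le _ _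
    _ = |a * b * (q.1 - x) * φ x / Real.sqrt s| * |v.1| +
        |(a * q.2 / Real.sqrt s - c) * φ x| * |v.2| := by rw [abs_mul, abs_mul]
    _ ≤ (a * Real.sqrt b * M) * ‖v‖ + ((a + c) * M) * ‖v‖ := by
        refine add_le_add
          (mul_le_mul hα ((Real.norm_eq_abs v.1) ▸ norm_fst_le v) (abs_nonneg _)
            (le_trans (abs_nonneg _) hα))
          (mul_le_mul hβ ((Real.norm_eq_abs v.2) ▸ norm_snd_le v) (abs_nonneg _)
            (le_trans (abs_nonneg _) hβ))
    _ = (a * Real.sqrt b * M + (a + c) * M) * ‖v‖ := by ring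

/-- `C_exp` is totally differentiable at every `(X,Y)` with `Y > 0`, with the partial
derivatives obtained by differentiation under the integral sign. -/
theorem stmt_3
    (W M a b c : ℝ) (φ : ℝ → ℝ)
    (hW : 0 < W) (hM : 0 < M) (hφm : Measurable φ)
    (hφ0 : ∀ x, 0 ≤ φ x) (hφM : ∀ x, φ x ≤ M)
    (hφs : ∀ x, x ∉ Set.Icc (0:ℝ) W → φ x = 0)
    (hφ1 : (∫ x in (0:ℝ)..W, φ x) = 1)
    (hb : 0 < b) (hc : 0 < c) (hca : c < a)
    (Cexp : ℝ → ℝ → ℝ)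
    (hCexp : ∀ X Y : ℝ, Cexp X Y =
      ∫ x in (0:ℝ)..W, (a * Real.sqrt (b * (X - x) ^ 2 + Y ^ 2) - c * Y) * φ x) :
    ∀ X Y : ℝ, 0 < Y →
      HasFDerivAt (fun q : ℝ × ℝ => Cexp q.1 q.2)
        ((a * b * ∫ x in (0:ℝ)..W,
            (X - x) * φ x / Real.sqrt (b * (X - x) ^ 2 + Y ^ 2)) •
          ContinuousLinearMap.fst ℝ ℝ ℝ +
         (a * Y * (∫ x in (0:ℝ)..W,
            φ x / Real.sqrt (b * (X - x) ^ 2 + Y ^ 2)) - c) •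
          ContinuousLinearMap.snd ℝ ℝ ℝ)
        (X, Y) := by
  intro X Y hY
  have ha : 0 < a := hc.trans hca
  -- basic positivity
  have hsq : ∀ x : ℝ, 0 < b * (X - x) ^ 2 + Y ^ 2 := fun x => by positivity
  have hYsq : ∀ x : ℝ, 0 < Real.sqrt (b * (X - x) ^ 2 + Y ^ 2) :=
    fun x => Real.sqrt_pos.2 (hsq x)
  -- points in the ball have positive second coordinate
  have hball : ∀ q ∈ Metric.ball ((X, Y) : ℝ × ℝ) (Y / 2), 0 < q.2 := by
    intro q hq
    rw [Metric.mem_ball] at hq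
    have h1 : |q.2 - Y| ≤ dist q (X, Y) := by
      rw [dist_eq_norm]
      simpa using norm_snd_le (q - (X, Y))
    have h2 : |q.2 - Y| < Y / 2 := lt_of_le_of_lt h1 hq
    have := abs_sub_lt_iff.mp h2
    linarith [this.2]
  -- integrability facts
  have hαint : IntegrableOn
      (fun x => a * b * (X - x) * φ x / Real.sqrt (b * (X - x) ^ 2 + Y ^ 2))
      (Set.Ioc 0 W) := by
    have hg : Continuous fun x : ℝ => a * b * (X - x) / Real.sqrt (b * (X - x) ^ 2 + Y ^ 2) :=
      Continuous.div (by fun_prop) (by fun_prop) fun x => (hYsq x).ne'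
    exact (aux_intOn W M hg hφm hφ0 hφM).congr (Eventually.of_forall fun x => by ring)
  have hβ1int : IntegrableOn
      (fun x => φ x / Real.sqrt (b * (X - x) ^ 2 + Y ^ 2)) (Set.Ioc 0 W) := by
    have hg : Continuous fun x : ℝ => (Real.sqrt (b * (X - x) ^ 2 + Y ^ 2))⁻¹ :=
      Continuous.inv₀ (by fun_prop) fun x => (hYsq x).ne'
    exact (aux_intOn W M hg hφm hφ0 hφM).congr
      (Eventually.of_forall fun x => by ring)
  have hφint : IntegrableOn φ (Set.Ioc 0 W) := by
    have := aux_intOn W M continuous_const (g := fun _ => (1:ℝ)) hφm hφ0 hφM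
    exact this.congr (Eventually.of_forall fun x => one_mul _)
  have hβint : IntegrableOn
      (fun x => (a * Y / Real.sqrt (b * (X - x) ^ 2 + Y ^ 2) - c) * φ x) (Set.Ioc 0 W) := by
    have := ((hβ1int.const_mul (a * Y)).sub (hφint.const_mul c))
    exact this.congr (Eventually.of_forall fun x => by simp only [Pi.sub_apply]; ring)
  have hFint : IntegrableOn
      (fun x => (a * Real.sqrt (b * (X - x) ^ 2 + Y ^ 2) - c * Y) * φ x) (Set.Ioc 0 W) := by
    have hg : Continuous fun x : ℝ => a * Real.sqrt (b * (X - x) ^ 2 + Y ^ 2) - c * Y := by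
      fun_prop
    exact aux_intOn W M hg hφm hφ0 hφM
  -- the key derivative of the integral
  have key : HasFDerivAt
      (fun q : ℝ × ℝ => ∫ x in Set.Ioc (0:ℝ) W,
        (a * Real.sqrt (b * (q.1 - x) ^ 2 + q.2 ^ 2) - c * q.2) * φ x)
      (∫ x in Set.Ioc (0:ℝ) W,
        ((a * b * (X - x) * φ x / Real.sqrt (b * (X - x) ^ 2 + Y ^ 2)) •
            ContinuousLinearMap.fst ℝ ℝ ℝ +
          ((a * Y / Real.sqrt (b * (X - x) ^ 2 + Y ^ 2) - c) * φ x) •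
            ContinuousLinearMap.snd ℝ ℝ ℝ))
      ((X, Y) : ℝ × ℝ) := by
    refine hasFDerivAt_integral_of_dominated_of_fderiv_le
      (𝕜 := ℝ) (x₀ := ((X, Y) : ℝ × ℝ))
      (F := fun (q : ℝ × ℝ) (x : ℝ) =>
        (a * Real.sqrt (b * (q.1 - x) ^ 2 + q.2 ^ 2) - c * q.2) * φ x)
      (F' := fun (q : ℝ × ℝ) (x : ℝ) =>
        (a * b * (q.1 - x) * φ x / Real.sqrt (b * (q.1 - x) ^ 2 + q.2 ^ 2)) •
          ContinuousLinearMap.fst ℝ ℝ ℝ +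
        ((a * q.2 / Real.sqrt (b * (q.1 - x) ^ 2 + q.2 ^ 2) - c) * φ x) •
          ContinuousLinearMap.snd ℝ ℝ ℝ)
      (bound := fun _ => a * Real.sqrt b * M + (a + c) * M)
      (Metric.ball_mem_nhds _ (half_pos hY)) ?_ hFint ?_ ?_ ?_ ?_
    · exact Eventually.of_forall fun q =>
        (Continuous.aestronglyMeasurable (by fun_prop)).mul hφm.aestronglyMeasurable
    · exact ((hαint.smul_const (ContinuousLinearMap.fst ℝ ℝ ℝ)).add
        (hβint.smul_const (ContinuousLinearMap.snd ℝ ℝ ℝ))).aestronglyMeasurable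
    · exact Eventually.of_forall fun x q hq =>
        aux_bound a b c M φ hb hc hca hφ0 hφM x q (hball q hq)
    · exact integrableOn_const measure_Ioc_lt_top.ne
    · exact Eventually.of_forall fun x q hq => aux_deriv a b c φ x q hb (hball q hq)
  have hfeq : (fun q : ℝ × ℝ => Cexp q.1 q.2) = fun q : ℝ × ℝ =>
      ∫ x in Set.Ioc (0:ℝ) W,
        (a * Real.sqrt (b * (q.1 - x) ^ 2 + q.2 ^ 2) - c * q.2) * φ x :=
    funext fun q => by rw [hCexp, intervalIntegral.integral_of_le hW.le]
  rw [hfeq]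
  convert key using 1
  rw [integral_add (hαint.smul_const _) (hβint.smul_const _),
    integral_smul_const, integral_smul_const]
  congr 1
  · congr 1
    rw [intervalIntegral.integral_of_le hW.le, ← integral_const_mul]
    exact integral_congr_ae (Eventually.of_forall fun x => by ring)
  · congr 1
    rw [intervalIntegral.integral_of_le hW.le]
    have e1 : (∫ x in Set.Ioc (0:ℝ) W,
        (a * Y / Real.sqrt (b * (X - x) ^ 2 + Y ^ 2) - c) * φ x)
        = ∫ x in Set.Ioc (0:ℝ) W,
          (a * Y * (φ x / Real.sqrt (b * (X - x) ^ 2 + Y ^ 2)) - c * φ x) :=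
      integral_congr_ae (Eventually.of_forall fun x => by ring)
    have hφ1' : (∫ x in Set.Ioc (0:ℝ) W, φ x) = 1 := by
      rw [← intervalIntegral.integral_of_le hW.le]; exact hφ1
    rw [e1, integral_sub (hβ1int.const_mul (a * Y)) (hφint.const_mul c),
      integral_const_mul, integral_const_mul, hφ1', mul_one]
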